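/- The pullback of the canonical symplectic form under the Kustaanheimo-Stiefel map agrees with the canonical form on the bilinear cone: on Σ¹ = {(z,w) ∈ ℍ×ℍ : Re{z̄ i w} = 0, z ≠ 0}, one has (K.S.)* Re{dP̄ ∧ dQ} = Re{dw̄ ∧ dz} restricted to Σ¹, where K.S.(z,w) = (Q,P) = (z̄ i z, z̄ i w/(2|z|²)). -/

import Mathlib

open Quaternion

/-- The quaternion unit `i`. -/
def qi : Quaternion ℝ := ⟨0,1,0,0⟩

/-- The Kustaanheimo-Stiefel map (z,w) ↦ (Q,P) = (z̄ i z, z̄ i w / (2|z|²)). -/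
noncomputable def KS (p : Quaternion ℝ × Quaternion ℝ) : Quaternion ℝ × Quaternion ℝ :=
  (star p.1 * qi * p.1, ((2 * ‖p.1‖ ^ 2)⁻¹ : ℝ) • (star p.1 * qi * p.2))

/-- The canonical 2-form Re{dw̄ ∧ dz} on T*ℍ ≅ ℍ×ℍ, evaluated on two tangent
vectors u = (uz,uw), v = (vz,vw): Re{ū_w v_z − v̄_w u_z}. -/
noncomputable def omegaH (u v : Quaternion ℝ × Quaternion ℝ) : ℝ :=
  (star u.2 * v.1 - star v.2 * u.1).re

@[simp] lemma qi_re : qi.re = 0 := rfl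
@[simp] lemma qi_imI : qi.imI = 1 := rfl
@[simp] lemma qi_imJ : qi.imJ = 0 := rfl
@[simp] lemma qi_imK : qi.imK = 0 := rfl

instance : StarModule ℝ (Quaternion ℝ) :=
  ⟨fun r x => by ext <;> simp⟩

instance : ContinuousStar (Quaternion ℝ) := by
  constructor
  show Continuous fun q : Quaternion ℝ => star q
  have : (fun q : Quaternion ℝ => star q) = fun q : Quaternion ℝ => ((2 * q.re : ℝ) : Quaternion ℝ) - q := by
    funext q
    ext <;> simp [Quaternion.re_coe, Quaternion.imI_coe, Quaternion.imJ_coe, Quaternion.imK_coe] <;> ring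
  rw [this]
  exact ((Quaternion.continuous_coe).comp ((continuous_const.mul (Quaternion.continuous_re)))).sub continuous_id

lemma re_mul_star_comm (a b : Quaternion ℝ) : (a * star b).re = (star a * b).re := by
  simp only [Quaternion.re_mul, Quaternion.re_star, Quaternion.imI_star, Quaternion.imJ_star,
    Quaternion.imK_star]
  ring

set_option maxHeartbeats 4000000 in
/-- The key polynomial identity, proved in coordinates. -/
lemma KS_aux (z w u1 u2 v1 v2 : Quaternion ℝ)
    (hBL : (star z * qi * w).re = 0)
    (hu : (star u1 * qi * w + star z * qi * u2).re = 0)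
    (hv : (star v1 * qi * w + star z * qi * v2).re = 0) :
    (star ((normSq z : ℝ) • (star u1 * qi * w + star z * qi * u2)
        - (2 * (star z * u1).re) • (star z * qi * w)) * (star v1 * qi * z + star z * qi * v1)
      - star ((normSq z : ℝ) • (star v1 * qi * w + star z * qi * v2)
        - (2 * (star z * v1).re) • (star z * qi * w)) * (star u1 * qi * z + star z * qi * u1)).re
      = 2 * (normSq z : ℝ) ^ 2 * (star u2 * v1 - star v2 * u1).re := by
  simp only [Quaternion.re_mul, Quaternion.imI_mul, Quaternion.imJ_mul, Quaternion.imK_mul,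
    Quaternion.re_add, Quaternion.imI_add, Quaternion.imJ_add, Quaternion.imK_add,
    Quaternion.re_sub, Quaternion.imI_sub, Quaternion.imJ_sub, Quaternion.imK_sub,
    Quaternion.re_star, Quaternion.imI_star, Quaternion.imJ_star, Quaternion.imK_star,
    Quaternion.re_smul, Quaternion.imI_smul, Quaternion.imJ_smul, Quaternion.imK_smul,
    Quaternion.normSq_def', qi_re, qi_imI, qi_imJ, qi_imK, smul_eq_mul] at hBL hu hv ⊢
  linear_combination ((-2)*z.imK*z.imK*z.imK*v1.imJ + (2)*z.imJ*z.imK*z.imK*v1.imK + (-2)*z.imJ*z.imJ*z.imK*v1.imJ + (2)*z.imJ*z.imJ*z.imJ*v1.imK + (-2)*z.imI*z.imK*z.imK*v1.re + (-2)*z.imI*z.imJ*z.imJ*v1.re + (-2)*z.imI*z.imI*z.imK*v1.imJ + (2)*z.imI*z.imI*z.imJ*v1.imK + (-2)*z.imI*z.imI*z.imI*v1.re + (2)*z.re*z.imK*z.imK*v1.imI + (2)*z.re*z.imJ*z.imJ*v1.imI + (2)*z.re*z.imI*z.imI*v1.imI + (-2)*z.re*z.re*z.imK*v1.imJ + (2)*z.re*z.re*z.imJ*v1.imK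 + (-2)*z.re*z.re*z.imI*v1.re + (2)*z.re*z.re*z.re*v1.imI) * hu + ((2)*z.imK*z.imK*z.imK*u1.imJ + (-2)*z.imJ*z.imK*z.imK*u1.imK + (2)*z.imJ*z.imJ*z.imK*u1.imJ + (-2)*z.imJ*z.imJ*z.imJ*u1.imK + (2)*z.imI*z.imK*z.imK*u1.re + (2)*z.imI*z.imJ*z.imJ*u1.re + (2)*z.imI*z.imI*z.imK*u1.imJ + (-2)*z.imI*z.imI*z.imJ*u1.imK + (2)*z.imI*z.imI*z.imI*u1.re + (-2)*z.re*z.imK*z.imK*u1.imI + (-2)*z.re*z.imJ*z.imJ*u1.imI + (-2)*z.re*z.imI*z.imI*u1.imI + (2)*z.re*z.re*z.imK*u1.imJ + (-2)*z.re*z.re*z.imJ*u1.imK + (2)*z.re*z.re*z.imI*u1.re + (-2)*z.re*z.re*z.re*u1.imI) * hv + ((-4)*z.imK*z.imK*u1.imI*v1.re + (4)*z.imK*z.imK*u1.re*v1.imI + (-4)*z.imJ*z.imJ*u1.imI*v1.re + (4)*z.imJ*z.imJ*u1.re*v1.imI + (4)*z.imI*z.imK*u1.imK*v1.re + (-4)*z.imI*z.imK*u1.imJ*v1.imI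 + (4)*z.imI*z.imK*u1.imI*v1.imJ + (-4)*z.imI*z.imK*u1.re*v1.imK + (4)*z.imI*z.imJ*u1.imK*v1.imI + (4)*z.imI*z.imJ*u1.imJ*v1.re + (-4)*z.imI*z.imJ*u1.imI*v1.imK + (-4)*z.imI*z.imJ*u1.re*v1.imJ + (-4)*z.imI*z.imI*u1.imK*v1.imJ + (4)*z.imI*z.imI*u1.imJ*v1.imK + (-4)*z.re*z.imK*u1.imK*v1.imI + (-4)*z.re*z.imK*u1.imJ*v1.re + (4)*z.re*z.imK*u1.imI*v1.imK + (4)*z.re*z.imK*u1.re*v1.imJ + (4)*z.re*z.imJ*u1.imK*v1.re + (-4)*z.re*z.imJ*u1.imJ*v1.imI + (4)*z.re*z.imJ*u1.imI*v1.imJ + (-4)*z.re*z.imJ*u1.re*v1.imK + (-4)*z.re*z.re*u1.imK*v1.imJ + (4)*z.re*z.re*u1.imJ*v1.imK) * hBL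

set_option maxHeartbeats 1000000 in
lemma KS_fderiv_apply (z w : Quaternion ℝ) (hz : z ≠ 0) (u : Quaternion ℝ × Quaternion ℝ) :
    fderiv ℝ KS (z, w) u =
      (star u.1 * qi * z + star z * qi * u.1,
        (2 * (normSq z : ℝ))⁻¹ • (star u.1 * qi * w + star z * qi * u.2)
          + (-((star z * u.1).re / (normSq z : ℝ) ^ 2)) • (star z * qi * w)) := by
  have hnz : ‖z‖ ≠ 0 := norm_ne_zero_iff.mpr hz
  have hr : (normSq z : ℝ) ≠ 0 := normSq_ne_zero.mpr hz
  have hnormsq : ‖z‖ ^ 2 = (normSq z : ℝ) := by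
    rw [sq, ← normSq_eq_norm_mul_self]
  have hne : (2 * ‖z‖ ^ 2) ≠ 0 := by positivity
  have hstar : HasFDerivAt (fun p : Quaternion ℝ × Quaternion ℝ => star p.1 * qi)
      ((((starL' ℝ : Quaternion ℝ ≃L[ℝ] Quaternion ℝ) : Quaternion ℝ →L[ℝ] Quaternion ℝ).comp
        (ContinuousLinearMap.fst ℝ (Quaternion ℝ) (Quaternion ℝ))).smulRight qi) (z, w) :=
    (hasFDerivAt_fst.star).mul_const' qi
  have h1 := hstar.mul' hasFDerivAt_fst
  have hg := hstar.mul' hasFDerivAt_snd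
  have hsq : HasFDerivAt (fun p : Quaternion ℝ × Quaternion ℝ => (2:ℝ) * ‖p.1‖ ^ 2)
      _ (z, w) := (hasFDerivAt_fst.norm_sq).const_mul 2
  have hcinv := (hasDerivAt_inv hne).comp_hasFDerivAt (z, w) hsq
  have h2 := hcinv.smul hg
  have hKS : HasFDerivAt KS _ (z, w) := h1.prodMk h2
  rw [hKS.fderiv]
  simp only [ContinuousLinearMap.add_apply, ContinuousLinearMap.comp_apply,
    ContinuousLinearMap.smulRight_apply, ContinuousLinearMap.coe_fst',
    ContinuousLinearMap.coe_snd', ContinuousLinearMap.smul_apply,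
    ContinuousLinearMap.prod_apply, Function.comp, ContinuousLinearEquiv.coe_coe, starL'_apply]
  rw [Prod.mk.injEq]
  refine ⟨?_, ?_⟩
  · rw [smul_eq_mul, smul_eq_mul, op_smul_eq_mul, add_comm]
  · simp only [innerSL_apply_apply, Quaternion.inner_def, smul_eq_mul]
    rw [hnormsq, add_comm ((star z * qi) * u.2)]
    congr 1
    congr 1
    rw [re_mul_star_comm]
    field_simp
    ring

lemma smul_form (z w x1 x2 : Quaternion ℝ) (hr : (normSq z : ℝ) ≠ 0) :
    (2 * (normSq z : ℝ))⁻¹ • (star x1 * qi * w + star z * qi * x2)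
      + (-((star z * x1).re / (normSq z : ℝ) ^ 2)) • (star z * qi * w)
      = (2 * (normSq z : ℝ) ^ 2)⁻¹ • ((normSq z : ℝ) • (star x1 * qi * w + star z * qi * x2)
          - (2 * (star z * x1).re) • (star z * qi * w)) := by
  rw [smul_sub, smul_smul, smul_smul, sub_eq_add_neg, ← neg_smul]
  congr 2
  · field_simp
  · field_simp

set_option maxHeartbeats 2000000 in
theorem KS_symplectic (z w : Quaternion ℝ) (hz : z ≠ 0)
    (hBL : (star z * qi * w).re = 0)
    (u v : Quaternion ℝ × Quaternion ℝ)
    (hu : (star u.1 * qi * w + star z * qi * u.2).re = 0)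
    (hv : (star v.1 * qi * w + star z * qi * v.2).re = 0) :
    omegaH (fderiv ℝ KS (z, w) u) (fderiv ℝ KS (z, w) v) = omegaH u v := by
  have hr : (normSq z : ℝ) ≠ 0 := normSq_ne_zero.mpr hz
  have key := KS_aux z w u.1 u.2 v.1 v.2 hBL hu hv
  rw [KS_fderiv_apply z w hz u, KS_fderiv_apply z w hz v]
  simp only [omegaH]
  rw [smul_form z w u.1 u.2 hr, smul_form z w v.1 v.2 hr]
  rw [Quaternion.star_smul, Quaternion.star_smul, smul_mul_assoc, smul_mul_assoc, ← smul_sub,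
    Quaternion.re_smul, smul_eq_mul, key]
  have h2 : (2 * (normSq z : ℝ) ^ 2) ≠ 0 := by positivity
  field_simp
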